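/- Let α, β > -1 be real numbers, let n > m > 6 be integers with n ≥ 3, and let p_0,…,p_n ∈ ℝ^d with P_n(t) := Σ_{i=0}^{n} p_i B_i^n(t). For real parameters λ_1, λ_2, λ_3, μ_1, μ_2, μ_3, define the boundary control points r_0,…,r_3 by the G³ left-endpoint formulas r_0 := p_0, r_1 := p_0 + (n/m)λ_1 Δp_0, r_2 := p_0 + (n/m)[2λ_1 + λ_2/(m-1)]Δp_0 + ((n-1)_2/(m-1)_2)λ_1² Δ²p_0, r_3 := p_0 + (n/m)[3λ_1 + 3λ_2/(m-1) + λ_3/((m-2)_2)]Δp_0 + 3((n-1)_2/(m-1)_2)[λ_1² + λ_1λ_2/(m-2)]Δ²p_0 + ((n-2)_3/(m-2)_3)λ_1³ Δ³p_0, and r_{m-3},…,r_m by the analogous G³ right-endpoint formulas in μ_1, μ_2, μ_3, and define the inner control points r_4,…,r_{m-4} to be the unique minimizers of E(λ_1,λ_2,λ_3,μ_1,μ_2,μ_3) := ∫₀¹ (1-t)^α t^β ‖P_n(t) - Σ_{i=0}^{m} r_i B_i^m(t)‖² dt for these fixed boundary points (via the constrained dual Bernstein basis of Π_m^{(3,3)}).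 Then the function (λ_1,λ_2,λ_3,μ_1,μ_2,μ_3) ↦ E is a polynomial function of total degree at most 6. -/

import Mathlib

open MeasureTheory Polynomial

/-- Bernstein polynomial `B_i^n(t) = C(n,i) t^i (1-t)^{n-i}` as a real function. -/
noncomputable def bern (n i : ℕ) (t : ℝ) : ℝ := (n.choose i : ℝ) * t ^ i * (1 - t) ^ (n - i)

/-- Pochhammer symbol `(a)_k = a(a+1)⋯(a+k-1)`. -/
noncomputable def poch (a : ℝ) (k : ℕ) : ℝ := (ascPochhammer ℝ k).eval a

/-- Binomial coefficient `C(u,v)` for an integer `v`, with the convention that it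
vanishes when `v < 0` or `v > u`. -/
noncomputable def chZ (u : ℕ) (v : ℤ) : ℝ := if 0 ≤ v then (u.choose v.toNat : ℝ) else 0

/-- Forward difference operator: `fdiff q k i = Δ^k q_i`. -/
def fdiff {E : Type*} [AddCommGroup E] (q : ℕ → E) : ℕ → ℕ → E
  | 0, i => q i
  | k + 1, i => fdiff q k (i + 1) - fdiff q k i

/-- The inner product `⟨f,g⟩_{α,β} = ∫₀¹ (1-t)^α t^β f(t) g(t) dt`. -/
noncomputable def jacobiInner (α β : ℝ) (f g : Polynomial ℝ) : ℝ :=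
  ∫ t in (0:ℝ)..1, (1 - t) ^ α * t ^ β * (f.eval t * g.eval t)

/-- The linear functional `p ↦ (d^i/dt^i p)(x)` on real polynomials. -/
noncomputable def evalDeriv (x : ℝ) (i : ℕ) : Polynomial ℝ →ₗ[ℝ] ℝ :=
  (Polynomial.leval x).comp
    (((Polynomial.derivative : Module.End ℝ (Polynomial ℝ)) ^ i : Module.End ℝ (Polynomial ℝ)))

/-- The space `Π_m^{(k,l)}`. -/
noncomputable def PiSpace (m : ℕ) (k l : ℤ) : Submodule ℝ (Polynomial ℝ) :=
  Polynomial.degreeLE ℝ (m : ℕ) ⊓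
    (⨅ i ∈ {i : ℕ | (i : ℤ) ≤ k}, LinearMap.ker (evalDeriv 0 i)) ⊓
    (⨅ j ∈ {j : ℕ | (j : ℤ) ≤ l}, LinearMap.ker (evalDeriv 1 j))

section AuxSec17

namespace Aux17

noncomputable def mono6 (σ : Fin 6 → ℕ) (x : Fin 6 → ℝ) : ℝ := ∏ i, x i ^ σ i

/-- scalar polynomial functions of total degree ≤ N -/
def SP (N : ℕ) (f : (Fin 6 → ℝ) → ℝ) : Prop :=
  ∃ q : MvPolynomial (Fin 6) ℝ, q.totalDegree ≤ N ∧ ∀ x, f x = MvPolynomial.eval x q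

/-- vector-valued polynomial functions of degree ≤ N with coefficients satisfying P -/
def VP {E : Type*} [AddCommGroup E] [Module ℝ E] (P : E → Prop) (N : ℕ)
    (f : (Fin 6 → ℝ) → E) : Prop :=
  ∃ (k : ℕ) (σ : Fin k → Fin 6 → ℕ) (c : Fin k → E),
    (∀ j, ∑ i, σ j i ≤ N) ∧ (∀ j, P (c j)) ∧ ∀ x, f x = ∑ j, mono6 (σ j) x • c j

variable {E : Type*} [AddCommGroup E] [Module ℝ E] {P : E → Prop} {N : ℕ}

theorem VP.congr {f g : (Fin 6 → ℝ) → E} (h : VP P N f) (hfg : ∀ x, f x = g x) :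
    VP P N g := by
  obtain ⟨k, σ, c, h1, h2, h3⟩ := h
  exact ⟨k, σ, c, h1, h2, fun x => (hfg x) ▸ h3 x⟩

theorem VP.const (v : E) (hv : P v) : VP P N (fun _ => v) :=
  ⟨1, fun _ _ => 0, fun _ => v, by simp, fun _ => hv, fun x => by simp [mono6]⟩

theorem VP.add {f g : (Fin 6 → ℝ) → E} (hf : VP P N f) (hg : VP P N g) :
    VP P N (fun x => f x + g x) := by
  obtain ⟨k₁, σ₁, c₁, hd₁, hP₁, hr₁⟩ := hf
  obtain ⟨k₂, σ₂, c₂, hd₂, hP₂, hr₂⟩ := hg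
  refine ⟨k₁ + k₂, Fin.addCases σ₁ σ₂, Fin.addCases c₁ c₂, ?_, ?_, ?_⟩
  · intro j
    refine Fin.addCases (fun i => ?_) (fun i => ?_) j <;>
      simp [Fin.addCases_left, Fin.addCases_right, hd₁, hd₂]
  · intro j
    refine Fin.addCases (fun i => ?_) (fun i => ?_) j <;>
      simp [Fin.addCases_left, Fin.addCases_right, hP₁, hP₂]
  · intro x
    rw [Fin.sum_univ_add]
    simp only [Fin.addCases_left, Fin.addCases_right]
    rw [← hr₁, ← hr₂]

theorem VP.constSmul {f : (Fin 6 → ℝ) → E} (a : ℝ) (hP : ∀ v, P v → P (a • v))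
    (hf : VP P N f) : VP P N (fun x => a • f x) := by
  obtain ⟨k, σ, c, hd, hPc, hr⟩ := hf
  refine ⟨k, σ, fun j => a • c j, hd, fun j => hP _ (hPc j), fun x => ?_⟩
  show a • f x = _
  rw [hr, Finset.smul_sum]
  exact Finset.sum_congr rfl fun j _ => smul_comm _ _ _

theorem VP.sub {f g : (Fin 6 → ℝ) → E} (hP : ∀ v, P v → P ((-1 : ℝ) • v))
    (hf : VP P N f) (hg : VP P N g) : VP P N (fun x => f x - g x) := by
  have := hf.add (hg.constSmul (-1) hP)
  exact this.congr fun x => by simp [sub_eq_add_neg]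

theorem VP.finsetSum {κ : Type*} (s : Finset κ) (F : κ → (Fin 6 → ℝ) → E) (hP0 : P 0)
    (h : ∀ j ∈ s, VP P N (F j)) : VP P N (fun x => ∑ j ∈ s, F j x) := by
  classical
  induction s using Finset.cons_induction with
  | empty => exact (VP.const 0 hP0).congr (by simp)
  | cons a s ha ih =>
    have := (h a (Finset.mem_cons_self a s)).add
      (ih fun j hj => h j (Finset.mem_cons.2 (Or.inr hj)))
    exact this.congr fun x => by rw [Finset.sum_cons]

theorem SP.smulVec {g : (Fin 6 → ℝ) → ℝ} (hg : SP N g) (v : E)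
    (hP : ∀ a : ℝ, P (a • v)) : VP P N (fun x => g x • v) := by
  classical
  obtain ⟨q, hq, hgq⟩ := hg
  set e := (Fintype.equivFin ↥q.support).symm
  refine ⟨Fintype.card ↥q.support, fun j => ⇑((e j : Fin 6 →₀ ℕ)),
    fun j => MvPolynomial.coeff (e j : Fin 6 →₀ ℕ) q • v, ?_, fun j => hP _, ?_⟩
  · intro j
    have h1 : ∑ i, ((e j : Fin 6 →₀ ℕ)) i = ((e j : Fin 6 →₀ ℕ)).sum fun _ n => n :=
      (Finsupp.sum_fintype (e j : Fin 6 →₀ ℕ) (fun _ n => n) (fun _ => rfl)).symm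
    rw [h1]
    exact le_trans (MvPolynomial.le_totalDegree (e j).2) hq
  · intro x
    have key : ∀ d : Fin 6 →₀ ℕ,
        (MvPolynomial.coeff d q * ∏ i, x i ^ d i) • v
          = mono6 (⇑d) x • (MvPolynomial.coeff d q • v) := by
      intro d
      rw [smul_smul, mul_comm]
      rfl
    calc g x • v = (∑ d ∈ q.support, MvPolynomial.coeff d q * ∏ i, x i ^ d i) • v := by
          rw [hgq, MvPolynomial.eval_eq']
      _ = ∑ d ∈ q.support, (MvPolynomial.coeff d q * ∏ i, x i ^ d i) • v :=
          Finset.sum_smul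
      _ = ∑ d : ↥q.support,
            (MvPolynomial.coeff (d : Fin 6 →₀ ℕ) q * ∏ i, x i ^ (d : Fin 6 →₀ ℕ) i) • v :=
          (Finset.sum_coe_sort _ _).symm
      _ = ∑ j : Fin (Fintype.card ↥q.support),
            (MvPolynomial.coeff (e j : Fin 6 →₀ ℕ) q * ∏ i, x i ^ (e j : Fin 6 →₀ ℕ) i) • v :=
          (Equiv.sum_comp e _).symm
      _ = _ := Finset.sum_congr rfl fun j _ => key _

theorem SP.master (a b c d e f g : ℝ) (i j k : Fin 6) :
    SP 3 (fun x => a + b * x i + c * x j + d * x k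
      + e * x i ^ 2 + f * (x i * x j) + g * x i ^ 3) := by
  have tdm : ∀ (p q : MvPolynomial (Fin 6) ℝ), p.totalDegree ≤ 3 → q.totalDegree ≤ 3 →
      (p + q).totalDegree ≤ 3 := fun p q hp hq =>
    le_trans (MvPolynomial.totalDegree_add p q) (max_le hp hq)
  have tdc : ∀ (a : ℝ) (p : MvPolynomial (Fin 6) ℝ), p.totalDegree ≤ 3 →
      (MvPolynomial.C a * p).totalDegree ≤ 3 := fun a p hp =>
    le_trans (MvPolynomial.totalDegree_mul _ _)
      (by simpa [MvPolynomial.totalDegree_C] using hp)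
  refine ⟨MvPolynomial.C a + MvPolynomial.C b * MvPolynomial.X i
      + MvPolynomial.C c * MvPolynomial.X j + MvPolynomial.C d * MvPolynomial.X k
      + MvPolynomial.C e * MvPolynomial.X i ^ 2
      + MvPolynomial.C f * (MvPolynomial.X i * MvPolynomial.X j)
      + MvPolynomial.C g * MvPolynomial.X i ^ 3, ?_, fun x => by simp⟩
  refine tdm _ _ (tdm _ _ (tdm _ _ (tdm _ _ (tdm _ _ (tdm _ _ ?_ ?_) ?_) ?_) ?_) ?_) ?_
  · simp [MvPolynomial.totalDegree_C]
  · exact tdc _ _ (by simp [MvPolynomial.totalDegree_X])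
  · exact tdc _ _ (by simp [MvPolynomial.totalDegree_X])
  · exact tdc _ _ (by simp [MvPolynomial.totalDegree_X])
  · exact tdc _ _ (by simp [MvPolynomial.totalDegree_X_pow])
  · exact tdc _ _ (le_trans (MvPolynomial.totalDegree_mul _ _)
      (by simp [MvPolynomial.totalDegree_X]))
  · exact tdc _ _ (by simp [MvPolynomial.totalDegree_X_pow])

theorem SP.congr {f g : (Fin 6 → ℝ) → ℝ} (h : SP N f) (hfg : ∀ x, f x = g x) : SP N g := by
  obtain ⟨q, h1, h2⟩ := h
  exact ⟨q, h1, fun x => (hfg x) ▸ h2 x⟩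

theorem VP.funSmul {E : Type*} [NormedAddCommGroup E] [NormedSpace ℝ E]
    {N : ℕ} {f : (Fin 6 → ℝ) → E}
    (hf : VP (fun _ => True) N f) (b : ℝ → ℝ) (hb : Continuous b) :
    VP (fun g : ℝ → E => Continuous g) N (fun x => fun t => b t • f x) := by
  obtain ⟨k, σ, c, hd, _, hr⟩ := hf
  refine ⟨k, σ, fun j => fun t => b t • c j, hd, fun j => hb.smul continuous_const,
    fun x => funext fun t => ?_⟩
  simp only [Finset.sum_apply, Pi.smul_apply]
  rw [hr x, Finset.smul_sum]
  exact Finset.sum_congr rfl fun j _ => smul_comm _ _ _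

theorem wleft (a b : ℝ) (hb : -1 < b) :
    IntervalIntegrable (fun t : ℝ => t ^ b * (1 - t) ^ a) volume 0 (1/2) := by
  apply IntervalIntegrable.mul_continuousOn
  · exact intervalIntegral.intervalIntegrable_rpow' hb
  · apply ContinuousOn.rpow_const
    · exact (continuous_const.sub continuous_id).continuousOn
    · intro t ht
      rw [Set.uIcc_of_le (by norm_num : (0:ℝ) ≤ 1/2)] at ht
      exact Or.inl (ne_of_gt (by linarith [ht.2]))

theorem wfull (a b : ℝ) (ha : -1 < a) (hb : -1 < b) :
    IntervalIntegrable (fun t : ℝ => (1 - t) ^ a * t ^ b) volume 0 1 := by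
  have key : IntervalIntegrable (fun t : ℝ => t ^ b * (1 - t) ^ a) volume 0 1 := by
    refine (wleft a b hb).trans ?_
    rw [IntervalIntegrable.iff_comp_neg]
    convert ((wleft b a ha).comp_add_right 1).symm using 1
    · ext1 x
      conv_lhs => rw [mul_comm]
      congr 2 <;> ring
    · norm_num
    · norm_num
  have : (fun t : ℝ => (1 - t) ^ a * t ^ b) = fun t => t ^ b * (1 - t) ^ a :=
    funext fun t => mul_comm _ _
  rw [this]
  exact key

end Aux17
end AuxSec17

theorem stmt17 (α β : ℝ) (hα : -1 < α) (hβ : -1 < β) (d n m : ℕ)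
    (hm : 6 < m) (hmn : m < n) (hn : 3 ≤ n)
    (p : ℕ → EuclideanSpace ℝ (Fin d))
    -- the constrained dual Bernstein basis of `Π_m^{(3,3)}`
    (D : ℕ → Polynomial ℝ)
    (hDmem : ∀ i : ℕ, 4 ≤ i → i ≤ m - 4 → D i ∈ PiSpace m 3 3)
    (hdual : ∀ i j : ℕ, 4 ≤ i → i ≤ m - 4 → 4 ≤ j → j ≤ m - 4 →
      jacobiInner α β (D i) (bernsteinPolynomial ℝ m j) = if i = j then 1 else 0)
    -- the control points, as functions of the parameters λ₁, λ₂, λ₃, μ₁, μ₂, μ₃: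
    (rf : ℝ → ℝ → ℝ → ℝ → ℝ → ℝ → ℕ → EuclideanSpace ℝ (Fin d))
    -- boundary control points: the G³ left-endpoint formulas ...
    (hr0 : ∀ lam1 lam2 lam3 mu1 mu2 mu3 : ℝ, rf lam1 lam2 lam3 mu1 mu2 mu3 0 = p 0)
    (hr1 : ∀ lam1 lam2 lam3 mu1 mu2 mu3 : ℝ,
      rf lam1 lam2 lam3 mu1 mu2 mu3 1 = p 0 + ((n : ℝ) / (m : ℝ) * lam1) • fdiff p 1 0)
    (hr2 : ∀ lam1 lam2 lam3 mu1 mu2 mu3 : ℝ,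
      rf lam1 lam2 lam3 mu1 mu2 mu3 2 = p 0 +
        ((n : ℝ) / (m : ℝ) * (2 * lam1 + lam2 / ((m : ℝ) - 1))) • fdiff p 1 0 +
        (poch ((n : ℝ) - 1) 2 / poch ((m : ℝ) - 1) 2 * lam1 ^ 2) • fdiff p 2 0)
    (hr3 : ∀ lam1 lam2 lam3 mu1 mu2 mu3 : ℝ,
      rf lam1 lam2 lam3 mu1 mu2 mu3 3 = p 0 +
        ((n : ℝ) / (m : ℝ) *
          (3 * lam1 + 3 * lam2 / ((m : ℝ) - 1) + lam3 / poch ((m : ℝ) - 2) 2)) • fdiff p 1 0 +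
        (3 * (poch ((n : ℝ) - 1) 2 / poch ((m : ℝ) - 1) 2) *
          (lam1 ^ 2 + lam1 * lam2 / ((m : ℝ) - 2))) • fdiff p 2 0 +
        (poch ((n : ℝ) - 2) 3 / poch ((m : ℝ) - 2) 3 * lam1 ^ 3) • fdiff p 3 0)
    -- ... and the analogous G³ right-endpoint formulas
    (hrm3 : ∀ lam1 lam2 lam3 mu1 mu2 mu3 : ℝ,
      rf lam1 lam2 lam3 mu1 mu2 mu3 (m - 3) = p n -
        ((n : ℝ) / (m : ℝ) *
          (3 * mu1 - 3 * mu2 / ((m : ℝ) - 1) + mu3 / poch ((m : ℝ) - 2) 2)) • fdiff p 1 (n - 1) +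
        (3 * (poch ((n : ℝ) - 1) 2 / poch ((m : ℝ) - 1) 2) *
          (mu1 ^ 2 - mu1 * mu2 / ((m : ℝ) - 2))) • fdiff p 2 (n - 2) -
        (poch ((n : ℝ) - 2) 3 / poch ((m : ℝ) - 2) 3 * mu1 ^ 3) • fdiff p 3 (n - 3))
    (hrm2 : ∀ lam1 lam2 lam3 mu1 mu2 mu3 : ℝ,
      rf lam1 lam2 lam3 mu1 mu2 mu3 (m - 2) = p n -
        ((n : ℝ) / (m : ℝ) * (2 * mu1 - mu2 / ((m : ℝ) - 1))) • fdiff p 1 (n - 1) +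
        (poch ((n : ℝ) - 1) 2 / poch ((m : ℝ) - 1) 2 * mu1 ^ 2) • fdiff p 2 (n - 2))
    (hrm1 : ∀ lam1 lam2 lam3 mu1 mu2 mu3 : ℝ,
      rf lam1 lam2 lam3 mu1 mu2 mu3 (m - 1) = p n -
        ((n : ℝ) / (m : ℝ) * mu1) • fdiff p 1 (n - 1))
    (hrm : ∀ lam1 lam2 lam3 mu1 mu2 mu3 : ℝ, rf lam1 lam2 lam3 mu1 mu2 mu3 m = p n)
    -- inner control points: the unique minimizers for the fixed boundary points,
    -- given via the constrained dual Bernstein basis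
    (hrin : ∀ (lam1 lam2 lam3 mu1 mu2 mu3 : ℝ) (i : ℕ), 4 ≤ i → i ≤ m - 4 →
      rf lam1 lam2 lam3 mu1 mu2 mu3 i = ∑ j ∈ Finset.range (n + 1),
        jacobiInner α β (bernsteinPolynomial ℝ n j) (D i) •
          (p j - ((n.choose j : ℝ))⁻¹ •
            ∑ h ∈ (Finset.range (m + 1)).filter (fun h : ℕ => h ≤ 3 ∨ m - 3 ≤ h),
              (chZ (n - m) ((j : ℤ) - (h : ℤ)) * (m.choose h : ℝ)) •
                rf lam1 lam2 lam3 mu1 mu2 mu3 h)) :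
    -- the error `E(λ₁, λ₂, λ₃, μ₁, μ₂, μ₃)` is a polynomial function of total degree at most 6
    ∃ F : MvPolynomial (Fin 6) ℝ, F.totalDegree ≤ 6 ∧
      ∀ lam1 lam2 lam3 mu1 mu2 mu3 : ℝ,
        (∫ t in (0:ℝ)..1, (1 - t) ^ α * t ^ β *
            ‖(∑ i ∈ Finset.range (n + 1), bern n i t • p i) -
              (∑ i ∈ Finset.range (m + 1),
                bern m i t • rf lam1 lam2 lam3 mu1 mu2 mu3 i)‖ ^ 2) =
          MvPolynomial.eval ![lam1, lam2, lam3, mu1, mu2, mu3] F := by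
  classical
  -- abbreviations
  have Ttriv : ∀ v : EuclideanSpace ℝ (Fin d), (fun _ : EuclideanSpace ℝ (Fin d) => True) v :=
    fun _ => trivial
  -- scalar polynomial facts
  have hS1 : Aux17.SP 3 (fun x : Fin 6 → ℝ => (n : ℝ) / (m : ℝ) * x 0) :=
    (Aux17.SP.master 0 ((n : ℝ) / (m : ℝ)) 0 0 0 0 0 0 1 2).congr (fun x => by ring)
  have hS2a : Aux17.SP 3 (fun x : Fin 6 → ℝ =>
      (n : ℝ) / (m : ℝ) * (2 * x 0 + x 1 / ((m : ℝ) - 1))) :=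
    (Aux17.SP.master 0 (2 * ((n : ℝ) / (m : ℝ))) ((n : ℝ) / (m : ℝ) * ((m : ℝ) - 1)⁻¹)
      0 0 0 0 0 1 2).congr (fun x => by ring)
  have hS2b : Aux17.SP 3 (fun x : Fin 6 → ℝ =>
      poch ((n : ℝ) - 1) 2 / poch ((m : ℝ) - 1) 2 * x 0 ^ 2) :=
    (Aux17.SP.master 0 0 0 0 (poch ((n : ℝ) - 1) 2 / poch ((m : ℝ) - 1) 2) 0 0 0 1 2).congr
      (fun x => by ring)
  have hS3a : Aux17.SP 3 (fun x : Fin 6 → ℝ => (n : ℝ) / (m : ℝ) *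
      (3 * x 0 + 3 * x 1 / ((m : ℝ) - 1) + x 2 / poch ((m : ℝ) - 2) 2)) :=
    (Aux17.SP.master 0 (3 * ((n : ℝ) / (m : ℝ))) (3 * ((n : ℝ) / (m : ℝ)) * ((m : ℝ) - 1)⁻¹)
      ((n : ℝ) / (m : ℝ) * (poch ((m : ℝ) - 2) 2)⁻¹) 0 0 0 0 1 2).congr (fun x => by ring)
  have hS3b : Aux17.SP 3 (fun x : Fin 6 → ℝ =>
      3 * (poch ((n : ℝ) - 1) 2 / poch ((m : ℝ) - 1) 2) *
        (x 0 ^ 2 + x 0 * x 1 / ((m : ℝ) - 2))) :=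
    (Aux17.SP.master 0 0 0 0 (3 * (poch ((n : ℝ) - 1) 2 / poch ((m : ℝ) - 1) 2))
      (3 * (poch ((n : ℝ) - 1) 2 / poch ((m : ℝ) - 1) 2) * ((m : ℝ) - 2)⁻¹) 0 0 1 2).congr
      (fun x => by ring)
  have hS3c : Aux17.SP 3 (fun x : Fin 6 → ℝ =>
      poch ((n : ℝ) - 2) 3 / poch ((m : ℝ) - 2) 3 * x 0 ^ 3) :=
    (Aux17.SP.master 0 0 0 0 0 0 (poch ((n : ℝ) - 2) 3 / poch ((m : ℝ) - 2) 3) 0 1 2).congr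
      (fun x => by ring)
  have hT1 : Aux17.SP 3 (fun x : Fin 6 → ℝ => (n : ℝ) / (m : ℝ) * x 3) :=
    (Aux17.SP.master 0 ((n : ℝ) / (m : ℝ)) 0 0 0 0 0 3 4 5).congr (fun x => by ring)
  have hT2a : Aux17.SP 3 (fun x : Fin 6 → ℝ =>
      (n : ℝ) / (m : ℝ) * (2 * x 3 - x 4 / ((m : ℝ) - 1))) :=
    (Aux17.SP.master 0 (2 * ((n : ℝ) / (m : ℝ))) (-((n : ℝ) / (m : ℝ) * ((m : ℝ) - 1)⁻¹))
      0 0 0 0 3 4 5).congr (fun x => by ring)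
  have hT2b : Aux17.SP 3 (fun x : Fin 6 → ℝ =>
      poch ((n : ℝ) - 1) 2 / poch ((m : ℝ) - 1) 2 * x 3 ^ 2) :=
    (Aux17.SP.master 0 0 0 0 (poch ((n : ℝ) - 1) 2 / poch ((m : ℝ) - 1) 2) 0 0 3 4 5).congr
      (fun x => by ring)
  have hT3a : Aux17.SP 3 (fun x : Fin 6 → ℝ => (n : ℝ) / (m : ℝ) *
      (3 * x 3 - 3 * x 4 / ((m : ℝ) - 1) + x 5 / poch ((m : ℝ) - 2) 2)) :=
    (Aux17.SP.master 0 (3 * ((n : ℝ) / (m : ℝ))) (-(3 * ((n : ℝ) / (m : ℝ)) * ((m : ℝ) - 1)⁻¹))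
      ((n : ℝ) / (m : ℝ) * (poch ((m : ℝ) - 2) 2)⁻¹) 0 0 0 3 4 5).congr (fun x => by ring)
  have hT3b : Aux17.SP 3 (fun x : Fin 6 → ℝ =>
      3 * (poch ((n : ℝ) - 1) 2 / poch ((m : ℝ) - 1) 2) *
        (x 3 ^ 2 - x 3 * x 4 / ((m : ℝ) - 2))) :=
    (Aux17.SP.master 0 0 0 0 (3 * (poch ((n : ℝ) - 1) 2 / poch ((m : ℝ) - 1) 2))
      (-(3 * (poch ((n : ℝ) - 1) 2 / poch ((m : ℝ) - 1) 2) * ((m : ℝ) - 2)⁻¹)) 0 3 4 5).congr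
      (fun x => by ring)
  have hT3c : Aux17.SP 3 (fun x : Fin 6 → ℝ =>
      poch ((n : ℝ) - 2) 3 / poch ((m : ℝ) - 2) 3 * x 3 ^ 3) :=
    (Aux17.SP.master 0 0 0 0 0 0 (poch ((n : ℝ) - 2) 3 / poch ((m : ℝ) - 2) 3) 3 4 5).congr
      (fun x => by ring)
  -- boundary control points are VP
  have hb0 : Aux17.VP (fun _ => True) 3
      (fun x : Fin 6 → ℝ => rf (x 0) (x 1) (x 2) (x 3) (x 4) (x 5) 0) :=
    (Aux17.VP.const (p 0) trivial).congr fun x => (hr0 (x 0) (x 1) (x 2) (x 3) (x 4) (x 5)).symm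
  have hb1 : Aux17.VP (fun _ => True) 3
      (fun x : Fin 6 → ℝ => rf (x 0) (x 1) (x 2) (x 3) (x 4) (x 5) 1) :=
    ((Aux17.VP.const (p 0) trivial).add (hS1.smulVec (fdiff p 1 0) (fun _ => trivial))).congr
      fun x => (hr1 (x 0) (x 1) (x 2) (x 3) (x 4) (x 5)).symm
  have hb2 : Aux17.VP (fun _ => True) 3
      (fun x : Fin 6 → ℝ => rf (x 0) (x 1) (x 2) (x 3) (x 4) (x 5) 2) :=
    (((Aux17.VP.const (p 0) trivial).add
        (hS2a.smulVec (fdiff p 1 0) (fun _ => trivial))).add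
        (hS2b.smulVec (fdiff p 2 0) (fun _ => trivial))).congr
      fun x => (hr2 (x 0) (x 1) (x 2) (x 3) (x 4) (x 5)).symm
  have hb3 : Aux17.VP (fun _ => True) 3
      (fun x : Fin 6 → ℝ => rf (x 0) (x 1) (x 2) (x 3) (x 4) (x 5) 3) :=
    ((((Aux17.VP.const (p 0) trivial).add
        (hS3a.smulVec (fdiff p 1 0) (fun _ => trivial))).add
        (hS3b.smulVec (fdiff p 2 0) (fun _ => trivial))).add
        (hS3c.smulVec (fdiff p 3 0) (fun _ => trivial))).congr
      fun x => (hr3 (x 0) (x 1) (x 2) (x 3) (x 4) (x 5)).symm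
  have hbm : Aux17.VP (fun _ => True) 3
      (fun x : Fin 6 → ℝ => rf (x 0) (x 1) (x 2) (x 3) (x 4) (x 5) m) :=
    (Aux17.VP.const (p n) trivial).congr fun x => (hrm (x 0) (x 1) (x 2) (x 3) (x 4) (x 5)).symm
  have hbm1 : Aux17.VP (fun _ => True) 3
      (fun x : Fin 6 → ℝ => rf (x 0) (x 1) (x 2) (x 3) (x 4) (x 5) (m - 1)) :=
    (Aux17.VP.sub (fun _ _ => trivial) (Aux17.VP.const (p n) trivial)
        (hT1.smulVec (fdiff p 1 (n - 1)) (fun _ => trivial))).congr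
      fun x => (hrm1 (x 0) (x 1) (x 2) (x 3) (x 4) (x 5)).symm
  have hbm2 : Aux17.VP (fun _ => True) 3
      (fun x : Fin 6 → ℝ => rf (x 0) (x 1) (x 2) (x 3) (x 4) (x 5) (m - 2)) :=
    ((Aux17.VP.sub (fun _ _ => trivial) (Aux17.VP.const (p n) trivial)
        (hT2a.smulVec (fdiff p 1 (n - 1)) (fun _ => trivial))).add
        (hT2b.smulVec (fdiff p 2 (n - 2)) (fun _ => trivial))).congr
      fun x => (hrm2 (x 0) (x 1) (x 2) (x 3) (x 4) (x 5)).symm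
  have hbm3 : Aux17.VP (fun _ => True) 3
      (fun x : Fin 6 → ℝ => rf (x 0) (x 1) (x 2) (x 3) (x 4) (x 5) (m - 3)) :=
    (Aux17.VP.sub (fun _ _ => trivial)
        ((Aux17.VP.sub (fun _ _ => trivial) (Aux17.VP.const (p n) trivial)
          (hT3a.smulVec (fdiff p 1 (n - 1)) (fun _ => trivial))).add
          (hT3b.smulVec (fdiff p 2 (n - 2)) (fun _ => trivial)))
        (hT3c.smulVec (fdiff p 3 (n - 3)) (fun _ => trivial))).congr
      fun x => (hrm3 (x 0) (x 1) (x 2) (x 3) (x 4) (x 5)).symm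
  -- boundary indices from the filter
  have hbdy : ∀ h ∈ (Finset.range (m + 1)).filter (fun h : ℕ => h ≤ 3 ∨ m - 3 ≤ h),
      Aux17.VP (fun _ => True) 3
        (fun x : Fin 6 → ℝ => rf (x 0) (x 1) (x 2) (x 3) (x 4) (x 5) h) := by
    intro h hh
    rw [Finset.mem_filter, Finset.mem_range] at hh
    obtain ⟨hlt, hcase⟩ := hh
    have hcases : h = 0 ∨ h = 1 ∨ h = 2 ∨ h = 3 ∨ h = m - 3 ∨ h = m - 2 ∨ h = m - 1 ∨ h = m := by
      omega
    rcases hcases with rfl | rfl | rfl | rfl | rfl | rfl | rfl | rfl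
    · exact hb0
    · exact hb1
    · exact hb2
    · exact hb3
    · exact hbm3
    · exact hbm2
    · exact hbm1
    · exact hbm
  -- inner control points are VP
  have hin : ∀ i : ℕ, 4 ≤ i → i ≤ m - 4 → Aux17.VP (fun _ => True) 3
      (fun x : Fin 6 → ℝ => rf (x 0) (x 1) (x 2) (x 3) (x 4) (x 5) i) := by
    intro i h4 h4'
    refine Aux17.VP.congr ?_
      (fun x => (hrin (x 0) (x 1) (x 2) (x 3) (x 4) (x 5) i h4 h4').symm)
    refine Aux17.VP.finsetSum _ _ trivial (fun j _ => ?_)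
    refine Aux17.VP.constSmul _ (fun _ _ => trivial) ?_
    refine Aux17.VP.sub (fun _ _ => trivial) (Aux17.VP.const _ trivial) ?_
    refine Aux17.VP.constSmul _ (fun _ _ => trivial) ?_
    exact Aux17.VP.finsetSum _ _ trivial
      (fun h hh => Aux17.VP.constSmul _ (fun _ _ => trivial) (hbdy h hh))
  -- all control points are VP
  have hall : ∀ i : ℕ, i ≤ m → Aux17.VP (fun _ => True) 3
      (fun x : Fin 6 → ℝ => rf (x 0) (x 1) (x 2) (x 3) (x 4) (x 5) i) := by
    intro i hi
    have hcases : (4 ≤ i ∧ i ≤ m - 4) ∨ i = 0 ∨ i = 1 ∨ i = 2 ∨ i = 3 ∨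
        i = m - 3 ∨ i = m - 2 ∨ i = m - 1 ∨ i = m := by omega
    rcases hcases with h | rfl | rfl | rfl | rfl | rfl | rfl | rfl | rfl
    · exact hin i h.1 h.2
    · exact hb0
    · exact hb1
    · exact hb2
    · exact hb3
    · exact hbm3
    · exact hbm2
    · exact hbm1
    · exact hbm
  -- continuity facts
  have contB : ∀ M i : ℕ, Continuous (bern M i) := by
    intro M i
    unfold bern
    fun_prop
  have contA : Continuous (fun t : ℝ => ∑ i ∈ Finset.range (n + 1), bern n i t • p i) := by
    apply continuous_finset_sum
    intro i _
    exact (contB n i).smul continuous_const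
  -- the function-valued difference is VP with continuous coefficients
  have hΦ : Aux17.VP (fun g : ℝ → EuclideanSpace ℝ (Fin d) => Continuous g) 3
      (fun x : Fin 6 → ℝ =>
        (fun t : ℝ => ∑ i ∈ Finset.range (n + 1), bern n i t • p i) -
        (fun t : ℝ => ∑ i ∈ Finset.range (m + 1),
          bern m i t • rf (x 0) (x 1) (x 2) (x 3) (x 4) (x 5) i)) := by
    refine Aux17.VP.sub (fun v hv => hv.const_smul (-1 : ℝ)) (Aux17.VP.const _ contA) ?_
    refine (Aux17.VP.finsetSum (Finset.range (m + 1))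
      (fun i => fun x : Fin 6 → ℝ => fun t : ℝ =>
        bern m i t • rf (x 0) (x 1) (x 2) (x 3) (x 4) (x 5) i) continuous_zero
      (fun i hi => ?_)).congr (fun x => ?_)
    · exact (hall i (Nat.lt_succ_iff.1 (Finset.mem_range.1 hi))).funSmul (bern m i) (contB m i)
    · funext t
      simp [Finset.sum_apply]
  obtain ⟨k, σ, g, hdeg, hcont, hrep⟩ := hΦ
  -- the polynomial
  refine ⟨∑ q : Fin k × Fin k,
      MvPolynomial.monomial (Finsupp.equivFunOnFinite.symm (fun i => σ q.1 i + σ q.2 i))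
        (∫ t in (0:ℝ)..1, (1 - t) ^ α * t ^ β * (inner ℝ (g q.1 t) (g q.2 t) : ℝ)), ?_, ?_⟩
  · -- total degree bound
    refine le_trans (MvPolynomial.totalDegree_finset_sum _ _) (Finset.sup_le fun q _ => ?_)
    refine le_trans (MvPolynomial.totalDegree_monomial_le _ _) ?_
    have hcoe : ⇑(Finsupp.equivFunOnFinite.symm (fun i => σ q.1 i + σ q.2 i))
        = fun i => σ q.1 i + σ q.2 i := rfl
    rw [Finsupp.sum_fintype _ _ (fun _ => rfl)]
    simp only [hcoe, id]
    rw [Finset.sum_add_distrib]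
    have := hdeg q.1
    have := hdeg q.2
    omega
  · -- the evaluation identity
    intro lam1 lam2 lam3 mu1 mu2 mu3
    have hdiff : ∀ t : ℝ,
        (∑ i ∈ Finset.range (n + 1), bern n i t • p i) -
          (∑ i ∈ Finset.range (m + 1), bern m i t • rf lam1 lam2 lam3 mu1 mu2 mu3 i)
        = ∑ j : Fin k, Aux17.mono6 (σ j) ![lam1, lam2, lam3, mu1, mu2, mu3] • g j t := by
      intro t
      have h1 := congrFun (hrep ![lam1, lam2, lam3, mu1, mu2, mu3]) t
      simp only [Pi.sub_apply, Finset.sum_apply, Pi.smul_apply] at h1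
      exact h1
    have key : ∀ t : ℝ, (1 - t) ^ α * t ^ β *
        ‖(∑ i ∈ Finset.range (n + 1), bern n i t • p i) -
          (∑ i ∈ Finset.range (m + 1), bern m i t • rf lam1 lam2 lam3 mu1 mu2 mu3 i)‖ ^ 2
        = ∑ q : Fin k × Fin k,
            (Aux17.mono6 (σ q.1) ![lam1, lam2, lam3, mu1, mu2, mu3] *
             Aux17.mono6 (σ q.2) ![lam1, lam2, lam3, mu1, mu2, mu3]) *
            ((1 - t) ^ α * t ^ β * (inner ℝ (g q.1 t) (g q.2 t) : ℝ)) := by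
      intro t
      rw [Fintype.sum_prod_type]
      rw [hdiff t, ← real_inner_self_eq_norm_sq, sum_inner, Finset.mul_sum]
      refine Finset.sum_congr rfl fun j _ => ?_
      rw [inner_sum, Finset.mul_sum]
      refine Finset.sum_congr rfl fun j' _ => ?_
      rw [real_inner_smul_left, real_inner_smul_right]
      ring
    have hint : ∀ q : Fin k × Fin k, IntervalIntegrable (fun t : ℝ =>
        (Aux17.mono6 (σ q.1) ![lam1, lam2, lam3, mu1, mu2, mu3] *
         Aux17.mono6 (σ q.2) ![lam1, lam2, lam3, mu1, mu2, mu3]) *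
        ((1 - t) ^ α * t ^ β * (inner ℝ (g q.1 t) (g q.2 t) : ℝ))) MeasureTheory.volume 0 1 :=
      fun q => ((Aux17.wfull α β hα hβ).mul_continuousOn
        ((Continuous.inner (hcont q.1) (hcont q.2)).continuousOn)).const_mul _
    calc (∫ t in (0:ℝ)..1, (1 - t) ^ α * t ^ β *
            ‖(∑ i ∈ Finset.range (n + 1), bern n i t • p i) -
              (∑ i ∈ Finset.range (m + 1),
                bern m i t • rf lam1 lam2 lam3 mu1 mu2 mu3 i)‖ ^ 2)
        = ∫ t in (0:ℝ)..1, ∑ q : Fin k × Fin k,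
            (Aux17.mono6 (σ q.1) ![lam1, lam2, lam3, mu1, mu2, mu3] *
             Aux17.mono6 (σ q.2) ![lam1, lam2, lam3, mu1, mu2, mu3]) *
            ((1 - t) ^ α * t ^ β * (inner ℝ (g q.1 t) (g q.2 t) : ℝ)) :=
          intervalIntegral.integral_congr (fun t _ => key t)
      _ = ∑ q : Fin k × Fin k, ∫ t in (0:ℝ)..1,
            (Aux17.mono6 (σ q.1) ![lam1, lam2, lam3, mu1, mu2, mu3] *
             Aux17.mono6 (σ q.2) ![lam1, lam2, lam3, mu1, mu2, mu3]) *
            ((1 - t) ^ α * t ^ β * (inner ℝ (g q.1 t) (g q.2 t) : ℝ)) :=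
          intervalIntegral.integral_finset_sum (fun q _ => hint q)
      _ = ∑ q : Fin k × Fin k,
            (Aux17.mono6 (σ q.1) ![lam1, lam2, lam3, mu1, mu2, mu3] *
             Aux17.mono6 (σ q.2) ![lam1, lam2, lam3, mu1, mu2, mu3]) *
            ∫ t in (0:ℝ)..1, (1 - t) ^ α * t ^ β * (inner ℝ (g q.1 t) (g q.2 t) : ℝ) :=
          Finset.sum_congr rfl fun q _ => intervalIntegral.integral_const_mul _ _
      _ = MvPolynomial.eval ![lam1, lam2, lam3, mu1, mu2, mu3] (∑ q : Fin k × Fin k,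
            MvPolynomial.monomial
              (Finsupp.equivFunOnFinite.symm (fun i => σ q.1 i + σ q.2 i))
              (∫ t in (0:ℝ)..1, (1 - t) ^ α * t ^ β *
                (inner ℝ (g q.1 t) (g q.2 t) : ℝ))) := by
          rw [map_sum]
          refine Finset.sum_congr rfl fun q _ => ?_
          rw [MvPolynomial.eval_monomial]
          rw [Finsupp.prod_fintype _ _ (fun i => pow_zero _)]
          have hcoe : ⇑(Finsupp.equivFunOnFinite.symm (fun i => σ q.1 i + σ q.2 i))
              = fun i => σ q.1 i + σ q.2 i := rfl
          simp only [hcoe]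
          simp only [Aux17.mono6, pow_add, Finset.prod_mul_distrib]
          ring
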